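/- Let r > 0, a ∈ ℝ, and define A(t,s) = e^{2s+2t} + (a−r)² e^{2s} + e^{2t} + (a+r)² and φ(t,s) = arcosh(A(t,s)/(4r e^{s+t})). Then ∂²φ/∂s∂t = 16 r e^{2s+2t} (a + r + (a−r)e^{2s})(a² − r² + e^{2t}) / (A² − 16 r² e^{2s+2t})^{3/2} at all points where A² − 16 r² e^{2s+2t} > 0. -/

import Mathlib

/-- Inverse hyperbolic cosine: `arcosh x = log (x + √(x² − 1))`. -/
noncomputable def arcosh (x : ℝ) : ℝ := Real.log (x + Real.sqrt (x ^ 2 - 1))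

/-- `A(t,s) = e^{2s+2t} + (a−r)²e^{2s} + e^{2t} + (a+r)²`. -/
noncomputable def Afun (r a t s : ℝ) : ℝ :=
  Real.exp (2 * s + 2 * t) + (a - r) ^ 2 * Real.exp (2 * s) + Real.exp (2 * t) + (a + r) ^ 2

/-- Hyperbolic distance between `(0,eᵗ)` and the point at arclength parameter `s` on the
half-circle geodesic of center `(a,0)` and radius `r`. -/
noncomputable def phiCirc (r a t s : ℝ) : ℝ :=
  arcosh (Afun r a t s / (4 * r * Real.exp (s + t)))

lemma arcosh_hasDerivAt {x : ℝ} (hx : 1 < x) :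
    HasDerivAt arcosh (1 / Real.sqrt (x ^ 2 - 1)) x := by
  have h1 : 0 < x ^ 2 - 1 := by nlinarith
  have hs : 0 < Real.sqrt (x ^ 2 - 1) := Real.sqrt_pos.mpr h1
  have hsq : HasDerivAt (fun y : ℝ => y ^ 2 - 1) (2 * x) x := by
    simpa using (hasDerivAt_pow 2 x).sub_const 1
  have hsqrt : HasDerivAt (fun y : ℝ => Real.sqrt (y ^ 2 - 1))
      (1 / (2 * Real.sqrt (x ^ 2 - 1)) * (2 * x)) x :=
    (Real.hasDerivAt_sqrt h1.ne').comp x hsq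
  have hu : HasDerivAt (fun y : ℝ => y + Real.sqrt (y ^ 2 - 1))
      (1 + 1 / (2 * Real.sqrt (x ^ 2 - 1)) * (2 * x)) x := (hasDerivAt_id x).add hsqrt
  have hx0 : 0 < x + Real.sqrt (x ^ 2 - 1) := by positivity
  have hlog := hu.log hx0.ne'
  have hval : (1 + 1 / (2 * Real.sqrt (x ^ 2 - 1)) * (2 * x)) / (x + Real.sqrt (x ^ 2 - 1))
      = 1 / Real.sqrt (x ^ 2 - 1) := by
    have h2 : Real.sqrt (x ^ 2 - 1) ^ 2 = x ^ 2 - 1 := Real.sq_sqrt h1.le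
    field_simp
    nlinarith [h2]
  unfold arcosh
  exact hval ▸ hlog

lemma inner_deriv (r a t s : ℝ) (hr : 0 < r)
    (h : 0 < Afun r a t s ^ 2 - 16 * r ^ 2 * Real.exp (2 * s + 2 * t)) :
    HasDerivAt (fun t' => phiCirc r a t' s)
      ((Real.exp (2 * s + 2 * t) + Real.exp (2 * t) - (a - r) ^ 2 * Real.exp (2 * s)
          - (a + r) ^ 2) /
        Real.sqrt (Afun r a t s ^ 2 - 16 * r ^ 2 * Real.exp (2 * s + 2 * t))) t := by
  set A := Afun r a t s with hA
  set D := A ^ 2 - 16 * r ^ 2 * Real.exp (2 * s + 2 * t) with hD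
  have hApos : 0 < A := by
    rw [hA]; unfold Afun; positivity
  have hc : 0 < 4 * r * Real.exp (s + t) := by positivity
  have hc2 : (4 * r * Real.exp (s + t)) ^ 2 = 16 * r ^ 2 * Real.exp (2 * s + 2 * t) := by
    rw [mul_pow, mul_pow, sq (Real.exp (s + t)), ← Real.exp_add]
    ring_nf
  have hAc : 4 * r * Real.exp (s + t) < A := by nlinarith
  have hx : 1 < A / (4 * r * Real.exp (s + t)) := (one_lt_div hc).mpr hAc
  -- derivative of A in t'
  have h1 : HasDerivAt (fun t' : ℝ => Real.exp (2 * s + 2 * t')) (Real.exp (2 * s + 2 * t) * 2) t := by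
    have : HasDerivAt (fun t' : ℝ => 2 * s + 2 * t') 2 t := by
      simpa using ((hasDerivAt_id t).const_mul 2).const_add (2 * s)
    simpa using this.exp
  have h2 : HasDerivAt (fun t' : ℝ => Real.exp (2 * t')) (Real.exp (2 * t) * 2) t := by
    have : HasDerivAt (fun t' : ℝ => 2 * t') 2 t := by
      simpa using (hasDerivAt_id t).const_mul 2
    simpa using this.exp
  have hAt : HasDerivAt (fun t' => Afun r a t' s)
      (2 * Real.exp (2 * s + 2 * t) + 2 * Real.exp (2 * t)) t := by
    unfold Afun
    exact (((h1.add_const ((a - r) ^ 2 * Real.exp (2 * s))).add h2).add_const ((a + r) ^ 2)).congr_deriv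
      (by ring)
  have hden : HasDerivAt (fun t' : ℝ => 4 * r * Real.exp (s + t')) (4 * r * Real.exp (s + t)) t := by
    have := (HasDerivAt.exp ((hasDerivAt_id t).const_add s)).const_mul (4 * r)
    simpa using this
  have hf := hAt.div hden hc.ne'
  have harc := (arcosh_hasDerivAt hx).comp t hf
  have hDle : 0 ≤ D := h.le
  have hsqD : 0 < Real.sqrt D := Real.sqrt_pos.mpr h
  have hsqarg : Real.sqrt ((A / (4 * r * Real.exp (s + t))) ^ 2 - 1)
      = Real.sqrt D / (4 * r * Real.exp (s + t)) := by
    have e1 : (A / (4 * r * Real.exp (s + t))) ^ 2 - 1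
        = (Real.sqrt D / (4 * r * Real.exp (s + t))) ^ 2 := by
      rw [div_pow, div_pow, Real.sq_sqrt hDle, hD, hc2]
      field_simp
    rw [e1, Real.sqrt_sq (by positivity)]
  have hval : 1 / Real.sqrt ((A / (4 * r * Real.exp (s + t))) ^ 2 - 1) *
      (((2 * Real.exp (2 * s + 2 * t) + 2 * Real.exp (2 * t)) * (4 * r * Real.exp (s + t)) -
          A * (4 * r * Real.exp (s + t))) / (4 * r * Real.exp (s + t)) ^ 2)
      = (Real.exp (2 * s + 2 * t) + Real.exp (2 * t) - (a - r) ^ 2 * Real.exp (2 * s)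
          - (a + r) ^ 2) / Real.sqrt D := by
    rw [hsqarg]
    have hAexp : A = Real.exp (2 * s + 2 * t) + (a - r) ^ 2 * Real.exp (2 * s)
        + Real.exp (2 * t) + (a + r) ^ 2 := by rw [hA]; rfl
    rw [hAexp]
    field_simp
    ring
  have : (fun t' => phiCirc r a t' s) = fun t' => arcosh (Afun r a t' s / (4 * r * Real.exp (s + t'))) := rfl
  rw [this]
  exact hval ▸ harc

theorem stmt3 (r a t s : ℝ) (hr : 0 < r)
    (hpos : 0 < Afun r a t s ^ 2 - 16 * r ^ 2 * Real.exp (2 * s + 2 * t)) :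
    deriv (fun s' => deriv (fun t' => phiCirc r a t' s') t) s =
      16 * r * Real.exp (2 * s + 2 * t) * (a + r + (a - r) * Real.exp (2 * s)) *
          (a ^ 2 - r ^ 2 + Real.exp (2 * t)) /
        (Afun r a t s ^ 2 - 16 * r ^ 2 * Real.exp (2 * s + 2 * t)) ^ ((3 : ℝ) / 2) := by
  -- the explicit inner derivative as a function of s'
  set F : ℝ → ℝ := fun s' =>
    (Real.exp (2 * s' + 2 * t) + Real.exp (2 * t) - (a - r) ^ 2 * Real.exp (2 * s')
        - (a + r) ^ 2) /
      Real.sqrt (Afun r a t s' ^ 2 - 16 * r ^ 2 * Real.exp (2 * s' + 2 * t)) with hF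
  have hcont : ContinuousAt
      (fun s' => Afun r a t s' ^ 2 - 16 * r ^ 2 * Real.exp (2 * s' + 2 * t)) s := by
    unfold Afun; fun_prop
  have hev : ∀ᶠ s' in nhds s,
      0 < Afun r a t s' ^ 2 - 16 * r ^ 2 * Real.exp (2 * s' + 2 * t) :=
    hcont.eventually (eventually_gt_nhds hpos)
  have heq : (fun s' => deriv (fun t' => phiCirc r a t' s') t) =ᶠ[nhds s] F := by
    filter_upwards [hev] with s' hs'
    exact (inner_deriv r a t s' hr hs').deriv
  rw [heq.deriv_eq]
  -- now differentiate F at s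
  set D := Afun r a t s ^ 2 - 16 * r ^ 2 * Real.exp (2 * s + 2 * t) with hD
  set S := Real.sqrt D with hS
  have hSpos : 0 < S := Real.sqrt_pos.mpr hpos
  have hS2 : S ^ 2 = D := Real.sq_sqrt hpos.le
  have e1 : HasDerivAt (fun s' : ℝ => Real.exp (2 * s' + 2 * t)) (Real.exp (2 * s + 2 * t) * 2) s := by
    have : HasDerivAt (fun s' : ℝ => 2 * s' + 2 * t) 2 s := by
      simpa using ((hasDerivAt_id s).const_mul 2).add_const (2 * t)
    simpa using this.exp
  have e2 : HasDerivAt (fun s' : ℝ => Real.exp (2 * s')) (Real.exp (2 * s) * 2) s := by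
    have : HasDerivAt (fun s' : ℝ => 2 * s') 2 s := by
      simpa using (hasDerivAt_id s).const_mul 2
    simpa using this.exp
  have hN : HasDerivAt (fun s' => Real.exp (2 * s' + 2 * t) + Real.exp (2 * t)
      - (a - r) ^ 2 * Real.exp (2 * s') - (a + r) ^ 2)
      (2 * Real.exp (2 * s + 2 * t) - 2 * (a - r) ^ 2 * Real.exp (2 * s)) s := by
    exact ((((e1.add_const (Real.exp (2 * t))).sub (e2.const_mul ((a - r) ^ 2))).sub_const
      ((a + r) ^ 2))).congr_deriv (by ring)
  have hAs : HasDerivAt (fun s' => Afun r a t s')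
      (2 * Real.exp (2 * s + 2 * t) + 2 * (a - r) ^ 2 * Real.exp (2 * s)) s := by
    unfold Afun
    exact (((e1.add (e2.const_mul ((a - r) ^ 2))).add_const (Real.exp (2 * t))).add_const
      ((a + r) ^ 2)).congr_deriv (by ring)
  have hDs : HasDerivAt (fun s' => Afun r a t s' ^ 2 - 16 * r ^ 2 * Real.exp (2 * s' + 2 * t))
      (2 * Afun r a t s * (2 * Real.exp (2 * s + 2 * t) + 2 * (a - r) ^ 2 * Real.exp (2 * s))
        - 32 * r ^ 2 * Real.exp (2 * s + 2 * t)) s := by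
    have h1 : HasDerivAt (fun s' => Afun r a t s' ^ 2)
        (2 * Afun r a t s * (2 * Real.exp (2 * s + 2 * t) + 2 * (a - r) ^ 2 * Real.exp (2 * s))) s := by
      have := hAs.pow 2
      exact this.congr_deriv (by ring)
    have h2 := (e1.const_mul (16 * r ^ 2))
    exact (h1.sub h2).congr_deriv (by ring)
  have hSqrt : HasDerivAt (fun s' => Real.sqrt (Afun r a t s' ^ 2 - 16 * r ^ 2 * Real.exp (2 * s' + 2 * t)))
      (1 / (2 * S) *
        (2 * Afun r a t s * (2 * Real.exp (2 * s + 2 * t) + 2 * (a - r) ^ 2 * Real.exp (2 * s))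
          - 32 * r ^ 2 * Real.exp (2 * s + 2 * t))) s :=
    (Real.hasDerivAt_sqrt hpos.ne').comp s hDs
  have hFd := hN.div hSqrt hSpos.ne'
  simp only [Pi.div_def] at hFd
  rw [hF, hFd.deriv]
  -- final algebraic identity
  have hD32 : D ^ ((3 : ℝ) / 2) = S ^ 3 := by
    rw [show ((3 : ℝ) / 2) = (1 / 2 : ℝ) * (3 : ℕ) by norm_num, Real.rpow_mul hpos.le,
      Real.rpow_natCast, hS, Real.sqrt_eq_rpow]
  rw [← hD, ← hS, hD32]
  have key : 2 * (2 * Real.exp (2 * s + 2 * t) - 2 * (a - r) ^ 2 * Real.exp (2 * s)) * D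
      - (Real.exp (2 * s + 2 * t) + Real.exp (2 * t) - (a - r) ^ 2 * Real.exp (2 * s)
          - (a + r) ^ 2) *
        (2 * Afun r a t s * (2 * Real.exp (2 * s + 2 * t) + 2 * (a - r) ^ 2 * Real.exp (2 * s))
          - 32 * r ^ 2 * Real.exp (2 * s + 2 * t))
      = 2 * (16 * r * Real.exp (2 * s + 2 * t) * (a + r + (a - r) * Real.exp (2 * s)) *
          (a ^ 2 - r ^ 2 + Real.exp (2 * t))) := by
    rw [hD]; unfold Afun
    rw [Real.exp_add]
    ring
  rw [div_eq_div_iff (by positivity) (by positivity)]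
  have hS2' : S * S = D := by nlinarith [hS2]
  field_simp
  rw [show (2 : ℝ) * (s + t) = 2 * s + 2 * t by ring]
  linear_combination key +
    2 * (2 * Real.exp (2 * s + 2 * t) - 2 * (a - r) ^ 2 * Real.exp (2 * s)) * hS2
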